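/- Let U ∈ U(n). There exist diagonal unitary matrices L, R with (L U R) having all row and column sums equal to 1 if and only if there exists a vector φ ∈ ℂⁿ with |φ_i| = 1 for all i such that |(Uφ)_i| = 1 for all i. -/

import Mathlib

private lemma entry_eq_aux {n : ℕ} {L R : Matrix (Fin n) (Fin n) ℂ} (hL : L.IsDiag)
    (hR : R.IsDiag) (U : Matrix (Fin n) (Fin n) ℂ) (i j : Fin n) :
    (L * U * R) i j = L i i * U i j * R j j := by
  rw [Matrix.mul_apply, Finset.sum_eq_single j]
  · rw [Matrix.mul_apply, Finset.sum_eq_single i]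
    · intro k _ hk
      rw [hL (Ne.symm hk), zero_mul]
    · simp
  · intro k _ hk
    rw [hR hk, mul_zero]
  · simp

private lemma diag_abs_one_aux {n : ℕ} {M : Matrix (Fin n) (Fin n) ℂ}
    (hM : M ∈ Matrix.unitaryGroup (Fin n) ℂ) (hd : M.IsDiag) (i : Fin n) :
    ‖M i i‖ = 1 := by
  have h := Matrix.mem_unitaryGroup_iff'.mp hM
  have h1 : (star M * M) i i = 1 := by rw [h]; simp
  rw [Matrix.mul_apply, Finset.sum_eq_single i] at h1
  · rw [Matrix.star_apply, star_comm_self'] at h1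
    have h2 : Complex.normSq (M i i) = 1 := by
      have := congrArg Complex.re h1
      simpa [Complex.mul_conj] using this
    have h3 : ‖M i i‖ ^ 2 = 1 := by
      rw [Complex.sq_norm]; exact h2
    nlinarith [norm_nonneg (M i i)]
  · intro k _ hk
    rw [hd hk, mul_zero]
  · simp

private lemma diagonal_mem_aux {n : ℕ} {d : Fin n → ℂ} (h : ∀ i, ‖d i‖ = 1) :
    Matrix.diagonal d ∈ Matrix.unitaryGroup (Fin n) ℂ := by
  rw [Matrix.mem_unitaryGroup_iff, Matrix.star_eq_conjTranspose,
    Matrix.diagonal_conjTranspose, Matrix.diagonal_mul_diagonal]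
  ext i j
  rcases eq_or_ne i j with rfl | hij
  · simp only [Matrix.diagonal_apply_eq, Pi.mul_apply, Pi.star_apply, Matrix.one_apply_eq]
    rw [Complex.star_def, Complex.mul_conj]
    norm_cast
    rw [← Complex.sq_norm, h i, one_pow]
  · simp [Matrix.diagonal_apply_ne _ hij, Matrix.one_apply_ne hij]

theorem stmt_3 (n : ℕ) (U : Matrix (Fin n) (Fin n) ℂ)
    (hU : U ∈ Matrix.unitaryGroup (Fin n) ℂ) :
    (∃ L R : Matrix (Fin n) (Fin n) ℂ,
      L ∈ Matrix.unitaryGroup (Fin n) ℂ ∧ L.IsDiag ∧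
      R ∈ Matrix.unitaryGroup (Fin n) ℂ ∧ R.IsDiag ∧
      (∀ i, ∑ j, (L * U * R) i j = 1) ∧ (∀ j, ∑ i, (L * U * R) i j = 1)) ↔
    (∃ φ : Fin n → ℂ, (∀ i, ‖φ i‖ = 1) ∧
      (∀ i, ‖U.mulVec φ i‖ = 1)) := by
  constructor
  · rintro ⟨L, R, hL, hLd, hR, hRd, hrow, _⟩
    refine ⟨fun j => R j j, fun j => diag_abs_one_aux hR hRd j, fun i => ?_⟩
    have hrow' : L i i * (U.mulVec (fun j => R j j)) i = 1 := by
      rw [← hrow i, Matrix.mulVec, dotProduct, Finset.mul_sum]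
      exact Finset.sum_congr rfl fun j _ => by
        rw [entry_eq_aux hLd hRd U i j]; ring
    have := congrArg (‖·‖) hrow'
    rw [norm_mul, diag_abs_one_aux hL hLd i, one_mul, norm_one] at this
    exact this
  · rintro ⟨φ, hφ, hψ⟩
    set ψ := U.mulVec φ with hψdef
    refine ⟨Matrix.diagonal (fun i => (starRingEnd ℂ) (ψ i)), Matrix.diagonal φ,
      diagonal_mem_aux (fun i => by simpa using hψ i), Matrix.isDiag_diagonal _,
      diagonal_mem_aux hφ, Matrix.isDiag_diagonal _, ?_, ?_⟩
    · intro i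
      have : ∀ j, (Matrix.diagonal (fun i => (starRingEnd ℂ) (ψ i)) * U * Matrix.diagonal φ) i j
          = (starRingEnd ℂ) (ψ i) * (U i j * φ j) := fun j => by
        rw [entry_eq_aux (Matrix.isDiag_diagonal _) (Matrix.isDiag_diagonal _) U i j]
        simp [Matrix.diagonal_apply_eq]; ring
      rw [Finset.sum_congr rfl fun j _ => this j, ← Finset.mul_sum]
      have hsum : ∑ j, U i j * φ j = ψ i := rfl
      rw [hsum]
      have : (starRingEnd ℂ) (ψ i) * ψ i = ((Complex.normSq (ψ i) : ℝ) : ℂ) := by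
        rw [mul_comm, Complex.mul_conj]
      rw [this, ← Complex.sq_norm, hψ i]
      norm_num
    · intro j
      have hback : (star U).mulVec ψ = φ := by
        rw [hψdef, Matrix.mulVec_mulVec, Matrix.mem_unitaryGroup_iff'.mp hU,
          Matrix.one_mulVec]
      have hkey : ∑ i, (starRingEnd ℂ) (ψ i) * U i j = (starRingEnd ℂ) (φ j) := by
        have := congrFun hback j
        rw [Matrix.mulVec, dotProduct] at this
        have h2 := congrArg (starRingEnd ℂ) this
        rw [map_sum] at h2
        rw [← h2]
        exact Finset.sum_congr rfl fun i _ => by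
          rw [Matrix.star_apply, map_mul]
          simp [mul_comm]
      have : ∀ i, (Matrix.diagonal (fun i => (starRingEnd ℂ) (ψ i)) * U * Matrix.diagonal φ) i j
          = ((starRingEnd ℂ) (ψ i) * U i j) * φ j := fun i => by
        rw [entry_eq_aux (Matrix.isDiag_diagonal _) (Matrix.isDiag_diagonal _) U i j]
        simp [Matrix.diagonal_apply_eq]
      rw [Finset.sum_congr rfl fun i _ => this i, ← Finset.sum_mul, hkey]
      rw [mul_comm, Complex.mul_conj, ← Complex.sq_norm, hφ j]
      norm_num
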